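/- arXiv:2110.07915 — 10 statements merged into one kernel-verified Lean document; each statement's English description precedes it below -/
import Mathlib

section
/- Let V be a finite-dimensional vector space over a field k and let Θ : V^d → k be a nondegenerate d-linear form (i.e., the only u ∈ V with Θ(v_1,...,u,...,v_{d-1}) = 0 for all placements of u and all v_i is u = 0). Then the center Z(V,Θ) = {φ ∈ End(V) : Θ(v_1,...,φ(v_i),...,v_j,...,v_d) = Θ(v_1,...,v_i,...,φ(v_j),...,v_d) for all i,j and all v_k ∈ V} is closed under composition. -/
open Function

/-- The center condition: `φ` is self-adjoint with respect to the multilinear map `Θ`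
in every pair of slots. -/
def InCenter {k : Type*} [Field k] {d : ℕ} {V T : Type*} [AddCommGroup V] [Module k V]
    [AddCommGroup T] [Module k T]
    (Θ : MultilinearMap k (fun _ : Fin d => V) T) (φ : V →ₗ[k] V) : Prop :=
  ∀ (i j : Fin d) (v : Fin d → V),
    Θ (Function.update v i (φ (v i))) = Θ (Function.update v j (φ (v j)))

/-- Nondegeneracy of a multilinear map: the only vector annihilating it in some slot
against all others is `0`. -/
def Nondeg {k : Type*} [Field k] {d : ℕ} {V T : Type*} [AddCommGroup V] [Module k V]
    [AddCommGroup T] [Module k T]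
    (Θ : MultilinearMap k (fun _ : Fin d => V) T) : Prop :=
  ∀ u : V, (∀ (i : Fin d) (v : Fin d → V), Θ (Function.update v i u) = 0) → u = 0

/-- the center of a nondegenerate multilinear form is closed under
composition. -/
theorem center_closed_under_comp {k : Type*} [Field k] {d : ℕ} (hd : 3 ≤ d)
    {V : Type*} [AddCommGroup V] [Module k V] [FiniteDimensional k V]
    (Θ : MultilinearMap k (fun _ : Fin d => V) k) (hΘ : Nondeg Θ)
    (φ ψ : V →ₗ[k] V) (hφ : InCenter Θ φ) (hψ : InCenter Θ ψ) :
    InCenter Θ (φ ∘ₗ ψ) := by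
  intro i j v
  rcases eq_or_ne i j with rfl | hij
  · rfl
  -- find a third index l
  have hl : ∃ l : Fin d, l ≠ i ∧ l ≠ j := by
    by_contra h
    push_neg at h
    have hsub : (Finset.univ : Finset (Fin d)) ⊆ {i, j} := by
      intro x _
      rcases eq_or_ne x i with rfl | hx
      · simp
      · simp [h x hx]
    have hcard := Finset.card_le_card hsub
    simp only [Finset.card_univ, Fintype.card_fin] at hcard
    have : ({i, j} : Finset (Fin d)).card ≤ 2 :=
      (Finset.card_insert_le _ _).trans (by simp)
    omega
  obtain ⟨l, hli, hlj⟩ := hl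
  have hji : j ≠ i := hij.symm
  simp only [LinearMap.comp_apply]
  calc Θ (update v i (φ (ψ (v i))))
      = Θ (update (update v j (φ (v j))) i (ψ (v i))) := by
        have h := hφ i j (update v i (ψ (v i)))
        rw [Function.update_idem, Function.update_self,
          Function.update_of_ne hji, Function.update_comm hij] at h
        exact h
    _ = Θ (update (update v j (φ (v j))) l (ψ (v l))) := by
        have h := hψ i l (update v j (φ (v j)))
        rwa [Function.update_of_ne hij, Function.update_of_ne hlj] at h
    _ = Θ (update (update v i (φ (v i))) l (ψ (v l))) := by
        have h := hφ j i (update v l (ψ (v l)))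
        rw [Function.update_of_ne hlj.symm, Function.update_of_ne hli.symm,
          Function.update_comm hlj, Function.update_comm hli] at h
        exact h
    _ = Θ (update (update v i (φ (v i))) j (ψ (v j))) := by
        have h := hψ l j (update v i (φ (v i)))
        rwa [Function.update_of_ne hli, Function.update_of_ne hji] at h
    _ = Θ (update v j (φ (ψ (v j)))) := by
        have h := hφ i j (update v j (ψ (v j)))
        rw [Function.update_of_ne hij, Function.update_self, Function.update_idem,
          Function.update_comm hji] at h
        exact h
end

section
/- Let Θ : V^d → k be a nondegenerate d-linear form on a finite-dimensional k-vector space V. Then any two elements φ, ψ of the center Z(V,Θ) commute: φ ∘ ψ = ψ ∘ φ. -/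
open Function

lemma key_comm {k : Type*} [Field k] {d : ℕ}
    {V : Type*} [AddCommGroup V] [Module k V]
    (Θ : MultilinearMap k (fun _ : Fin d => V) k)
    (φ ψ : V →ₗ[k] V) (hφ : InCenter Θ φ) (hψ : InCenter Θ ψ)
    (i j l : Fin d) (hij : i ≠ j) (hil : i ≠ l) (hjl : j ≠ l) (v : Fin d → V) :
    Θ (update v i (φ (ψ (v i)))) = Θ (update v i (ψ (φ (v i)))) := by
  have e1 : Θ (update v i (φ (ψ (v i))))
      = Θ (update (update v j (φ (v j))) l (ψ (v l))) := by
    calc Θ (update v i (φ (ψ (v i))))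
        = Θ (update (update v i (ψ (v i))) i (φ ((update v i (ψ (v i))) i))) := by
          rw [Function.update_self, Function.update_idem]
      _ = Θ (update (update v i (ψ (v i))) j (φ ((update v i (ψ (v i))) j))) := hφ i j _
      _ = Θ (update (update v j (φ (v j))) i (ψ ((update v j (φ (v j))) i))) := by
          rw [Function.update_of_ne hij.symm, Function.update_comm hij,
            Function.update_of_ne hij]
      _ = Θ (update (update v j (φ (v j))) l (ψ ((update v j (φ (v j))) l))) := hψ i l _
      _ = Θ (update (update v j (φ (v j))) l (ψ (v l))) := by
          rw [Function.update_of_ne hjl.symm]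
  have e2 : Θ (update v i (ψ (φ (v i))))
      = Θ (update (update v j (φ (v j))) l (ψ (v l))) := by
    calc Θ (update v i (ψ (φ (v i))))
        = Θ (update (update v i (φ (v i))) i (ψ ((update v i (φ (v i))) i))) := by
          rw [Function.update_self, Function.update_idem]
      _ = Θ (update (update v i (φ (v i))) l (ψ ((update v i (φ (v i))) l))) := hψ i l _
      _ = Θ (update (update v l (ψ (v l))) i (φ ((update v l (ψ (v l))) i))) := by
          rw [Function.update_of_ne hil.symm, Function.update_comm hil,
            Function.update_of_ne hil]
      _ = Θ (update (update v l (ψ (v l))) j (φ ((update v l (ψ (v l))) j))) := hφ i j _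
      _ = Θ (update (update v j (φ (v j))) l (ψ (v l))) := by
          rw [Function.update_of_ne hjl, Function.update_comm hjl.symm]
  rw [e1, e2]

/-- any two elements of the center of a nondegenerate multilinear form
commute. -/
theorem center_comm {k : Type*} [Field k] {d : ℕ} (hd : 3 ≤ d)
    {V : Type*} [AddCommGroup V] [Module k V] [FiniteDimensional k V]
    (Θ : MultilinearMap k (fun _ : Fin d => V) k) (hΘ : Nondeg Θ)
    (φ ψ : V →ₗ[k] V) (hφ : InCenter Θ φ) (hψ : InCenter Θ ψ) :
    φ ∘ₗ ψ = ψ ∘ₗ φ := by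
  obtain ⟨n, rfl⟩ : ∃ n, d = n + 3 := ⟨d - 3, by omega⟩
  ext x
  simp only [LinearMap.comp_apply]
  rw [← sub_eq_zero]
  apply hΘ
  intro i v
  have h1 : (1 : Fin (n+3)) ≠ 0 := by simp [Fin.ext_iff]
  have h2 : (2 : Fin (n+3)) ≠ 0 := by simp [Fin.ext_iff, Nat.mod_eq_of_lt (show 2 < n+3 by omega)]
  have h12 : (1 : Fin (n+3)) ≠ 2 := by simp [Fin.ext_iff, Nat.mod_eq_of_lt (show 2 < n+3 by omega)]
  have hij : i ≠ i + 1 := fun h => h1 (left_eq_add.mp h)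
  have hil : i ≠ i + 2 := fun h => h2 (left_eq_add.mp h)
  have hjl : i + 1 ≠ i + 2 := fun h => h12 (add_left_cancel h)
  have := key_comm Θ φ ψ hφ hψ i (i+1) (i+2) hij hil hjl (update v i x)
  rw [Θ.map_update_sub]
  rw [show update v i (φ (ψ x)) = update (update v i x) i (φ (ψ ((update v i x) i))) by
    rw [Function.update_self, Function.update_idem]]
  rw [show update v i (ψ (φ x)) = update (update v i x) i (ψ (φ ((update v i x) i))) by
    rw [Function.update_self, Function.update_idem]]
  rw [this, sub_self]
end

section
/- Let Θ : V^d → k be a nondegenerate d-linear form. Then Z(V,Θ) is a commutative subalgebra of End(V): it contains the identity, is closed under scalar multiplication, addition, and composition, and composition is commutative on it. -/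
open Function

section Aux

variable {k : Type*} [Field k] {d : ℕ} {V : Type*} [AddCommGroup V] [Module k V]

lemma exists_third (hd : 3 ≤ d) (i j : Fin d) : ∃ l : Fin d, l ≠ i ∧ l ≠ j := by
  by_contra h
  push_neg at h
  have hsub : (Finset.univ : Finset (Fin d)) ⊆ {i, j} := by
    intro l _
    rcases eq_or_ne l i with h' | h'
    · simp [h']
    · simp [h l h']
  have h1 := Finset.card_le_card hsub
  have h2 : ({i, j} : Finset (Fin d)).card ≤ 2 := by
    refine (Finset.card_insert_le _ _).trans ?_
    simp
  simp [Finset.card_univ] at h1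
  omega

/-- Key computation: `φ ∘ ψ` in slot `i` can be rewritten as `ψ` in slot `l`
and `φ` in slot `b`, using an auxiliary slot `j`. -/
lemma key (Θ : MultilinearMap k (fun _ : Fin d => V) k) {φ ψ : V →ₗ[k] V}
    (hφ : InCenter Θ φ) (hψ : InCenter Θ ψ)
    {i j l b : Fin d} (hji : j ≠ i) (hli : l ≠ i) (hlj : l ≠ j) (hbl : b ≠ l)
    (v : Fin d → V) :
    Θ (update v i (φ (ψ (v i)))) =
      Θ (update (update v l (ψ (v l))) b (φ (v b))) := by
  have step1 : Θ (update v i (φ (ψ (v i)))) =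
      Θ (update (update v i (ψ (v i))) j (φ (v j))) := by
    have h := hφ i j (update v i (ψ (v i)))
    simpa [update_idem, update_of_ne hji] using h
  have step2 : Θ (update (update v i (ψ (v i))) j (φ (v j))) =
      Θ (update (update v j (φ (v j))) l (ψ (v l))) := by
    rw [update_comm hji.symm]
    have h := hψ i l (update v j (φ (v j)))
    simpa [update_idem, update_of_ne hji.symm, update_of_ne hlj] using h
  have step3 : Θ (update (update v j (φ (v j))) l (ψ (v l))) =
      Θ (update (update v l (ψ (v l))) b (φ (v b))) := by
    rw [update_comm hlj.symm]
    have h := hφ j b (update v l (ψ (v l)))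
    simpa [update_idem, update_of_ne hlj.symm, update_of_ne hbl] using h
  rw [step1, step2, step3]

/-- Swap lemma: `ψ` in slot `l`, `φ` in slot `b` equals `φ` in slot `l`, `ψ` in slot `b`,
using an auxiliary slot `c`. -/
lemma swap (Θ : MultilinearMap k (fun _ : Fin d => V) k) {φ ψ : V →ₗ[k] V}
    (hφ : InCenter Θ φ) (hψ : InCenter Θ ψ)
    {l b c : Fin d} (hbl : b ≠ l) (hcl : c ≠ l) (hcb : c ≠ b)
    (v : Fin d → V) :
    Θ (update (update v l (ψ (v l))) b (φ (v b))) =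
      Θ (update (update v l (φ (v l))) b (ψ (v b))) := by
  have step1 : Θ (update (update v l (ψ (v l))) b (φ (v b))) =
      Θ (update (update v l (ψ (v l))) c (φ (v c))) := by
    have h := hφ b c (update v l (ψ (v l)))
    simpa [update_of_ne hbl, update_of_ne hcl] using h
  have step2 : Θ (update (update v l (ψ (v l))) c (φ (v c))) =
      Θ (update (update v c (φ (v c))) b (ψ (v b))) := by
    rw [update_comm hcl.symm]
    have h := hψ l b (update v c (φ (v c)))
    simpa [update_of_ne hcl.symm, update_of_ne hcb.symm] using h
  have step3 : Θ (update (update v c (φ (v c))) b (ψ (v b))) =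
      Θ (update (update v l (φ (v l))) b (ψ (v b))) := by
    rw [update_comm hcb, update_comm hbl.symm]
    have h := hφ c l (update v b (ψ (v b)))
    simpa [update_of_ne hcb, update_of_ne (show l ≠ b from hbl.symm)] using h
  rw [step1, step2, step3]

end Aux

/-- the center of a nondegenerate multilinear form is a commutative
subalgebra of `End V`. -/
theorem center_is_commutative_subalgebra {k : Type*} [Field k] {d : ℕ} (hd : 3 ≤ d)
    {V : Type*} [AddCommGroup V] [Module k V] [FiniteDimensional k V]
    (Θ : MultilinearMap k (fun _ : Fin d => V) k) (hΘ : Nondeg Θ) :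
    InCenter Θ (LinearMap.id : V →ₗ[k] V) ∧
    (∀ (c : k) (φ : V →ₗ[k] V), InCenter Θ φ → InCenter Θ (c • φ)) ∧
    (∀ φ ψ : V →ₗ[k] V, InCenter Θ φ → InCenter Θ ψ → InCenter Θ (φ + ψ)) ∧
    (∀ φ ψ : V →ₗ[k] V, InCenter Θ φ → InCenter Θ ψ → InCenter Θ (φ ∘ₗ ψ)) ∧
    (∀ φ ψ : V →ₗ[k] V, InCenter Θ φ → InCenter Θ ψ → φ ∘ₗ ψ = ψ ∘ₗ φ) := by
  refine ⟨?_, ?_, ?_, ?_, ?_⟩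
  · intro i j v
    simp [update_eq_self]
  · intro c φ hφ i j v
    have h := hφ i j v
    simp only [LinearMap.smul_apply]
    rw [Θ.map_update_smul, Θ.map_update_smul, h]
  · intro φ ψ hφ hψ i j v
    have h1 := hφ i j v
    have h2 := hψ i j v
    simp only [LinearMap.add_apply]
    rw [Θ.map_update_add, Θ.map_update_add, h1, h2]
  · intro φ ψ hφ hψ i j v
    rcases eq_or_ne i j with rfl | hij
    · rfl
    obtain ⟨l, hli, hlj⟩ := exists_third hd i j
    have h1 : Θ (update v i ((φ ∘ₗ ψ) (v i))) =
        Θ (update (update v l (ψ (v l))) i (φ (v i))) :=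
      key Θ hφ hψ (Ne.symm hij) hli hlj hli.symm v
    have h2 : Θ (update v j ((φ ∘ₗ ψ) (v j))) =
        Θ (update (update v l (ψ (v l))) i (φ (v i))) :=
      key Θ hφ hψ hij hlj hli hli.symm v
    rw [h1, h2]
  · intro φ ψ hφ hψ
    ext x
    simp only [LinearMap.comp_apply]
    have main : φ (ψ x) - ψ (φ x) = 0 := by
      apply hΘ
      intro i v
      obtain ⟨j, hji, _⟩ := exists_third hd i i
      obtain ⟨l, hli, hlj⟩ := exists_third hd i j
      obtain ⟨c, hcl, hci⟩ := exists_third hd l i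
      set v' := update v i x with hv'
      have e1 : Θ (update v i (φ (ψ x))) =
          Θ (update (update v' l (ψ (v' l))) i (φ (v' i))) := by
        have h := key Θ hφ hψ hji hli hlj hli.symm v'
        simpa [hv', update_idem, update_self] using h
      have e2 : Θ (update v i (ψ (φ x))) =
          Θ (update (update v' l (φ (v' l))) i (ψ (v' i))) := by
        have h := key Θ hψ hφ hji hli hlj hli.symm v'
        simpa [hv', update_idem, update_self] using h
      have e3 := swap Θ hφ hψ hli.symm hcl hci v'
      rw [Θ.map_update_sub, e1, e2, e3, sub_self]
    exact sub_eq_zero.mp main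
end

section
/- Let Θ : V^d → k be a d-linear form and suppose e_1, ..., e_s ∈ Z(V,Θ) form a complete set of orthogonal idempotents (e_i² = e_i, e_i e_j = 0 for i ≠ j, and e_1 + ... + e_s = id_V). Set V_i = e_i(V). Then V = V_1 ⊕ ... ⊕ V_s and Θ(v_1,...,v_d) = 0 whenever v_j ∈ V_{k_j} with not all k_j equal. -/
open Function

/-- a complete set of orthogonal idempotents in the center of a
`d`-linear form yields a direct sum decomposition of the form. -/
theorem idempotents_give_decomposition {k : Type*} [Field k] {d : ℕ} (hd : 3 ≤ d)
    {V : Type*} [AddCommGroup V] [Module k V] [FiniteDimensional k V]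
    (Θ : MultilinearMap k (fun _ : Fin d => V) k) {s : ℕ}
    (e : Fin s → (V →ₗ[k] V))
    (hcen : ∀ i, InCenter Θ (e i))
    (hidem : ∀ i, e i ∘ₗ e i = e i)
    (horth : ∀ i j, i ≠ j → e i ∘ₗ e j = 0)
    (hsum : ∑ i, e i = LinearMap.id) :
    DirectSum.IsInternal (fun i : Fin s => LinearMap.range (e i)) ∧
    (∀ (v : Fin d → V) (κ : Fin d → Fin s),
      (∀ m, v m ∈ LinearMap.range (e (κ m))) → (∃ m m', κ m ≠ κ m') → Θ v = 0) := by
  have hfix : ∀ i (x : V), x ∈ LinearMap.range (e i) → e i x = x := by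
    rintro i x ⟨w, rfl⟩
    rw [← LinearMap.comp_apply, hidem]
  constructor
  · apply DirectSum.isInternal_submodule_of_iSupIndep_of_iSup_eq_top
    · intro i
      rw [Submodule.disjoint_def]
      intro x hx hx'
      have hle : (⨆ j, ⨆ (_ : j ≠ i), LinearMap.range (e j)) ≤ LinearMap.ker (e i) := by
        refine iSup_le fun j => iSup_le fun hj => ?_
        rintro y ⟨w, rfl⟩
        simp only [LinearMap.mem_ker, ← LinearMap.comp_apply, horth i j (Ne.symm hj),
          LinearMap.zero_apply]
      have := hle hx'
      rw [LinearMap.mem_ker] at this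
      rw [← hfix i x hx, this]
    · rw [eq_top_iff]
      intro x _
      have : x = ∑ i, e i x := by
        rw [← LinearMap.sum_apply, hsum, LinearMap.id_apply]
      rw [this]
      exact Submodule.sum_mem _ fun i _ =>
        Submodule.mem_iSup_of_mem i (LinearMap.mem_range_self (e i) x)
  · rintro v κ hv ⟨m, m', hmm⟩
    have h1 : Function.update v m' (e (κ m') (v m')) = v := by
      rw [hfix _ _ (hv m'), Function.update_eq_self]
    have h2 : e (κ m') (v m) = 0 := by
      obtain ⟨w, hw⟩ := hv m
      rw [← hw, ← LinearMap.comp_apply, horth _ _ (Ne.symm hmm), LinearMap.zero_apply]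
    calc Θ v = Θ (Function.update v m' (e (κ m') (v m'))) := by rw [h1]
      _ = Θ (Function.update v m (e (κ m') (v m))) := hcen (κ m') m' m v
      _ = 0 := by rw [h2, Θ.map_update_zero]
end

section
/- Let Θ : V^d → k be a d-linear form and suppose V = V_1 ⊕ ... ⊕ V_s is a direct sum decomposition of Θ, meaning Θ(v_1,...,v_d) = 0 unless all v_i lie in the same summand V_j. For each i, let e_i : V → V be the projection onto V_i along the other summands. Then the e_i form a complete set of orthogonal idempotents lying in the center Z(V,Θ). -/
open Function

/-- the projections attached to a direct sum decomposition of a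
`d`-linear form form a complete set of orthogonal idempotents in the center. -/
theorem decomposition_gives_idempotents {k : Type*} [Field k] {d : ℕ} (hd : 3 ≤ d)
    {V : Type*} [AddCommGroup V] [Module k V] [FiniteDimensional k V]
    (Θ : MultilinearMap k (fun _ : Fin d => V) k) {s : ℕ}
    (W : Fin s → Submodule k V)
    (hint : DirectSum.IsInternal W)
    (hvanish : ∀ (v : Fin d → V) (κ : Fin d → Fin s),
      (∀ m, v m ∈ W (κ m)) → (∃ m m', κ m ≠ κ m') → Θ v = 0)
    (e : Fin s → (V →ₗ[k] V))
    (hmem : ∀ i v, e i v ∈ W i)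
    (hproj : ∀ i, ∀ v ∈ W i, e i v = v)
    (hzero : ∀ i j, i ≠ j → ∀ v ∈ W j, e i v = 0) :
    (∀ i, e i ∘ₗ e i = e i) ∧
    (∀ i j, i ≠ j → e i ∘ₗ e j = 0) ∧
    (∑ i, e i = LinearMap.id) ∧
    (∀ i, InCenter Θ (e i)) := by
  have i0 : Fin d := ⟨0, by omega⟩
  -- completeness
  have hsum : (∑ i, e i) = LinearMap.id := by
    ext v
    have hv : v ∈ ⨆ i, W i := by
      rw [hint.submodule_iSup_eq_top]; trivial
    simp only [LinearMap.sum_apply, LinearMap.id_coe, id_eq]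
    refine Submodule.iSup_induction (motive := fun x => ∑ i, e i x = x) W hv ?_ ?_ ?_
    · intro j x hx
      rw [Finset.sum_eq_single j]
      · exact hproj j x hx
      · intro b _ hb; exact hzero b j hb x hx
      · intro h; exact absurd (Finset.mem_univ j) h
    · simp
    · intro x y hx hy
      simp only [map_add]
      rw [Finset.sum_add_distrib, hx, hy]
  have hid : ∀ x : V, ∑ i, e i x = x := by
    intro x
    have := congrArg (fun f : V →ₗ[k] V => f x) hsum
    simpa using this
  -- key expansion lemma
  have key : ∀ w : Fin d → V, Θ w = ∑ t, Θ (fun m => e t (w m)) := by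
    intro w
    have h1 : Θ w = Θ (fun m => ∑ t, e t (w m)) := by
      congr 1; funext m; exact (hid (w m)).symm
    rw [h1, MultilinearMap.map_sum]
    have hz : ∀ r : Fin d → Fin s, (∃ m m', r m ≠ r m') →
        Θ (fun m => e (r m) (w m)) = 0 := by
      intro r hr
      exact hvanish _ r (fun m => hmem _ _) hr
    have himg : ∑ t : Fin s, Θ (fun m => e t (w m)) =
        ∑ r ∈ Finset.univ.image (fun t : Fin s => (fun _ : Fin d => t)),
          Θ (fun m => e (r m) (w m)) :=
      (Finset.sum_image (f := fun r : Fin d → Fin s => Θ (fun m => e (r m) (w m)))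
        (g := fun t : Fin s => (fun _ : Fin d => t))
        (by intro x _ y _ hxy; exact congrFun hxy i0)).symm
    rw [himg]
    refine (Finset.sum_subset (Finset.subset_univ _) ?_).symm
    intro r _ hr
    apply hz
    by_contra hc
    push_neg at hc
    apply hr
    simp only [Finset.mem_image, Finset.mem_univ, true_and]
    exact ⟨r i0, by funext m; exact hc i0 m⟩
  refine ⟨?_, ?_, hsum, ?_⟩
  · intro i; ext v
    exact hproj i _ (hmem i v)
  · intro i j hij; ext v
    exact hzero i j hij _ (hmem j v)
  · intro l
    have step : ∀ (i : Fin d) (v : Fin d → V),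
        Θ (Function.update v i (e l (v i))) = Θ (fun m => e l (v m)) := by
      intro i v
      rw [key (Function.update v i (e l (v i)))]
      rw [Finset.sum_eq_single l]
      · congr 1; funext m
        by_cases hm : m = i
        · subst hm
          simp only [Function.update_self]
          exact hproj l _ (hmem l (v m))
        · rw [Function.update_of_ne hm]
      · intro t _ htl
        apply MultilinearMap.map_coord_zero _ i
        simp only [Function.update_self]
        exact hzero t l htl _ (hmem l (v i))
      · intro h; exact absurd (Finset.mem_univ l) h
    intro i j v
    rw [step i v, step j v]
end

section
/- Let Θ : V^d → k be a nondegenerate d-linear form on a finite-dimensional vector space. Then the decomposition of (V,Θ) into a direct sum of indecomposable d-linear forms is unique up to permutation of the summands: if V = U_1 ⊕ ... ⊕ U_r = W_1 ⊕ ... ⊕ W_s are two decompositions of Θ with each restriction indecomposable, then r = s and after a permutation U_i = W_i as subspaces. -/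
open Function

/-- Indecomposability of a multilinear map: there is no splitting `V = W₁ ⊕ W₂` into
two nonzero subspaces on which `Θ` is additive (i.e. `Θ` vanishes on mixed tuples). -/
def Indec {k : Type*} [Field k] {d : ℕ} {V T : Type*} [AddCommGroup V] [Module k V]
    [AddCommGroup T] [Module k T]
    (Θ : MultilinearMap k (fun _ : Fin d => V) T) : Prop :=
  ¬ ∃ (W₁ W₂ : Submodule k V), W₁ ≠ ⊥ ∧ W₂ ≠ ⊥ ∧ IsCompl W₁ W₂ ∧
    ∀ (v w : Fin d → V), (∀ m, v m ∈ W₁) → (∀ m, w m ∈ W₂) →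
      Θ (fun m => v m + w m) = Θ v + Θ w

section KSAux

variable {k : Type*} [Field k] {V : Type*} [AddCommGroup V] [Module k V] {d : ℕ}

/-- The projection onto the `i`-th summand of an internal direct sum decomposition. -/
noncomputable def ksProj {r : ℕ} (U : Fin r → Submodule k V) (h : DirectSum.IsInternal U)
    (i : Fin r) : V →ₗ[k] V where
  toFun x := ((LinearEquiv.ofBijective (DirectSum.coeLinearMap U) h).symm x i : V)
  map_add' x y := by simp [DirectSum.add_apply]
  map_smul' c x := by simp [DirectSum.smul_apply]

theorem ksProj_mem {r : ℕ} (U : Fin r → Submodule k V) (h : DirectSum.IsInternal U)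
    (i : Fin r) (x : V) : ksProj U h i x ∈ U i :=
  ((LinearEquiv.ofBijective (DirectSum.coeLinearMap U) h).symm x i).2

theorem ksProj_of_mem {r : ℕ} {U : Fin r → Submodule k V} (h : DirectSum.IsInternal U)
    {i : Fin r} {x : V} (hx : x ∈ U i) : ksProj U h i x = x := by
  have := h.ofBijective_coeLinearMap_of_mem hx
  simp [ksProj, this]

theorem ksProj_sum {r : ℕ} (U : Fin r → Submodule k V) (h : DirectSum.IsInternal U)
    (x : V) : ∑ i, ksProj U h i x = x := by
  set E := LinearEquiv.ofBijective (DirectSum.coeLinearMap U) h with hE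
  have h1 : E (E.symm x) = x := E.apply_symm_apply x
  have h2 : (E.symm x) = ∑ i, DirectSum.of (fun i => U i) i (E.symm x i) :=
    (DirectSum.sum_univ_of _).symm
  calc ∑ i, ksProj U h i x
      = ∑ i, DirectSum.coeLinearMap U (DirectSum.of (fun i => U i) i (E.symm x i)) := by
        refine Finset.sum_congr rfl fun i _ => ?_
        rw [DirectSum.coeLinearMap_of]; rfl
    _ = DirectSum.coeLinearMap U (∑ i, DirectSum.of (fun i => U i) i (E.symm x i)) :=
        (map_sum _ _ _).symm
    _ = x := by rw [← h2]; exact h1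

theorem ks_exists_two_ne (hd : 3 ≤ d) (m : Fin d) : ∃ a b : Fin d, a ≠ b ∧ a ≠ m ∧ b ≠ m := by
  classical
  have hcard : 1 < (Finset.univ.erase m).card := by
    rw [Finset.card_erase_of_mem (Finset.mem_univ m)]
    simp only [Finset.card_univ, Fintype.card_fin]
    omega
  obtain ⟨a, b, ha, hb, hab⟩ := Finset.one_lt_card_iff.1 hcard
  exact ⟨a, b, hab, Finset.ne_of_mem_erase ha, Finset.ne_of_mem_erase hb⟩

variable (Θ : MultilinearMap k (fun _ : Fin d => V) k)

theorem ksProj_slot {r : ℕ} (U : Fin r → Submodule k V) (h : DirectSum.IsInternal U)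
    (hvan : ∀ (v : Fin d → V) (κ : Fin d → Fin r),
      (∀ m, v m ∈ U (κ m)) → (∃ m m', κ m ≠ κ m') → Θ v = 0)
    (i : Fin r) (v : Fin d → V) (m : Fin d) :
    Θ (update v m (ksProj U h i (v m))) = Θ (fun t => ksProj U h i (v t)) := by
  classical
  set e := ksProj U h with he
  set A : Fin d → Finset (Fin r) := fun t => if t = m then {i} else Finset.univ with hA
  have lhs : (update v m (e i (v m))) = fun t => ∑ j ∈ A t, e j (v t) := by
    funext t
    by_cases ht : t = m
    · subst ht; simp [hA]
    · simp [hA, ht, update_of_ne ht, ksProj_sum]; exact (ksProj_sum U h (v t)).symm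
  have key := Θ.map_sum_finset (fun t j => e j (v t)) A
  rw [lhs, key]
  have hconst : (fun _ : Fin d => i) ∈ Fintype.piFinset A := by
    simp only [Fintype.mem_piFinset, hA]
    intro t; by_cases ht : t = m <;> simp [ht]
  rw [Finset.sum_eq_single_of_mem _ hconst]
  intro κ hκ hne
  have hκm : κ m = i := by
    have := (Fintype.mem_piFinset.1 hκ) m
    simpa [hA] using this
  have : ∃ t, κ t ≠ i := by
    by_contra hc
    push_neg at hc
    exact hne (funext hc)
  obtain ⟨t, ht⟩ := this
  refine hvan _ κ (fun t' => ksProj_mem U h (κ t') (v t')) ⟨t, m, ?_⟩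
  rw [hκm]; exact ht

theorem ksProj_center {r : ℕ} (U : Fin r → Submodule k V) (h : DirectSum.IsInternal U)
    (hvan : ∀ (v : Fin d → V) (κ : Fin d → Fin r),
      (∀ m, v m ∈ U (κ m)) → (∃ m m', κ m ≠ κ m') → Θ v = 0)
    (i : Fin r) (a b : Fin d) (v : Fin d → V) :
    Θ (update v a (ksProj U h i (v a))) = Θ (update v b (ksProj U h i (v b))) := by
  rw [ksProj_slot Θ U h hvan i v a, ksProj_slot Θ U h hvan i v b]

theorem ks_comm_general (hd : 3 ≤ d) (hΘ : Nondeg Θ)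
    (e f : V →ₗ[k] V)
    (cE : ∀ (a b : Fin d) (v : Fin d → V),
      Θ (update v a (e (v a))) = Θ (update v b (e (v b))))
    (cF : ∀ (a b : Fin d) (v : Fin d → V),
      Θ (update v a (f (v a))) = Θ (update v b (f (v b))))
    (x : V) : e (f x) = f (e x) := by
  classical
  have key : ∀ (m : Fin d) (v : Fin d → V),
      Θ (update v m (e (f x) - f (e x))) = 0 := by
    intro m v
    rw [Θ.map_update_sub, sub_eq_zero]
    obtain ⟨a, b, hab, ham, hbm⟩ := ks_exists_two_ne hd m
    have h1 : Θ (update v m (e (f x)))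
        = Θ (update (update v m (f x)) a (e (v a))) := by
      have h := cE m a (update v m (f x))
      rw [show update (update v m (f x)) m (e (update v m (f x) m))
            = update v m (e (f x)) from by
          rw [update_self, update_idem],
        show update (update v m (f x)) a (e (update v m (f x) a))
            = update (update v m (f x)) a (e (v a)) from by
          rw [update_of_ne ham]] at h
      exact h
    have h2 : Θ (update (update v m (f x)) a (e (v a)))
        = Θ (update (update (update v a (e (v a))) m x) b (f (v b))) := by
      have h := cF m b (update (update v a (e (v a))) m x)
      rw [show update (update (update v a (e (v a))) m x) m
            (f (update (update v a (e (v a))) m x m))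
            = update (update v m (f x)) a (e (v a)) from by
          rw [update_self, update_idem]
          funext t
          simp only [Function.update_apply]
          split_ifs <;> simp_all,
        show update (update (update v a (e (v a))) m x) b
            (f (update (update v a (e (v a))) m x b))
            = update (update (update v a (e (v a))) m x) b (f (v b)) from by
          rw [update_of_ne hbm, update_of_ne hab.symm]] at h
      exact h
    have h3 : Θ (update (update (update v a (e (v a))) m x) b (f (v b)))
        = Θ (update (update v b (f (v b))) m (e x)) := by
      have h := cE a m (update (update v b (f (v b))) m x)
      rw [show update (update (update v b (f (v b))) m x) a
            (e (update (update v b (f (v b))) m x a))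
            = update (update (update v a (e (v a))) m x) b (f (v b)) from by
          rw [update_of_ne ham, update_of_ne hab]
          funext t
          simp only [Function.update_apply]
          split_ifs <;> simp_all,
        show update (update (update v b (f (v b))) m x) m
            (e (update (update v b (f (v b))) m x m))
            = update (update v b (f (v b))) m (e x) from by
          rw [update_self, update_idem]] at h
      exact h
    have h4 : Θ (update (update v b (f (v b))) m (e x))
        = Θ (update v m (f (e x))) := by
      have h := cF b m (update v m (e x))
      rw [show update (update v m (e x)) b (f (update v m (e x) b))
            = update (update v b (f (v b))) m (e x) from by
          rw [update_of_ne hbm]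
          funext t
          simp only [Function.update_apply]
          split_ifs <;> simp_all,
        show update (update v m (e x)) m (f (update v m (e x) m))
            = update v m (f (e x)) from by
          rw [update_self, update_idem]] at h
      exact h
    rw [h1, h2, h3, h4]
  exact sub_eq_zero.1 (hΘ _ key)

theorem ks_add_split (hd : 3 ≤ d) (f : V →ₗ[k] V)
    (cF : ∀ (a b : Fin d) (v : Fin d → V),
      Θ (update v a (f (v a))) = Θ (update v b (f (v b))))
    (a b : Fin d → V) (ha : ∀ t, f (a t) = a t) (hb : ∀ t, f (b t) = 0) :
    Θ (a + b) = Θ a + Θ b := by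
  classical
  have hne : (Finset.univ : Finset (Fin d)) ≠ ∅ := by
    have : (⟨0, by omega⟩ : Fin d) ∈ (Finset.univ : Finset (Fin d)) := Finset.mem_univ _
    intro hc; rw [hc] at this; exact absurd this (Finset.notMem_empty _)
  have van : ∀ S ∈ (Finset.univ : Finset (Finset (Fin d))),
      S ∉ ({Finset.univ, ∅} : Finset (Finset (Fin d))) → Θ (S.piecewise a b) = 0 := by
    intro S _ hS
    simp only [Finset.mem_insert, Finset.mem_singleton] at hS
    push_neg at hS
    obtain ⟨hSu, hSe⟩ := hS
    obtain ⟨p, hp⟩ := hSe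
    have : ∃ q, q ∉ S := by
      by_contra hc; push_neg at hc
      exact hSu (Finset.eq_univ_iff_forall.2 hc)
    obtain ⟨q, hq⟩ := this
    set u := S.piecewise a b with hu
    have hup : u p = a p := Finset.piecewise_eq_of_mem _ _ _ hp
    have huq : u q = b q := Finset.piecewise_eq_of_notMem _ _ _ hq
    have e1 : Θ u = Θ (update u p (f (u p))) := by
      rw [hup, ha, ← hup, update_eq_self]
    rw [e1, cF p q, huq, hb, Θ.map_update_zero]
  calc Θ (a + b) = ∑ S : Finset (Fin d), Θ (S.piecewise a b) := Θ.map_add_univ a b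
    _ = ∑ S ∈ ({Finset.univ, ∅} : Finset (Finset (Fin d))), Θ (S.piecewise a b) :=
        (Finset.sum_subset (Finset.subset_univ _) van).symm
    _ = Θ (Finset.univ.piecewise a b) + Θ ((∅ : Finset (Fin d)).piecewise a b) :=
        Finset.sum_pair hne
    _ = Θ a + Θ b := by rw [Finset.piecewise_univ, Finset.piecewise_empty]

theorem ks_exists_le (hd : 3 ≤ d) (hΘ : Nondeg Θ)
    {r s : ℕ} (U : Fin r → Submodule k V) (W : Fin s → Submodule k V)
    (hUint : DirectSum.IsInternal U) (hWint : DirectSum.IsInternal W)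
    (hUne : ∀ i, U i ≠ ⊥)
    (hUvanish : ∀ (v : Fin d → V) (κ : Fin d → Fin r),
      (∀ m, v m ∈ U (κ m)) → (∃ m m', κ m ≠ κ m') → Θ v = 0)
    (hWvanish : ∀ (v : Fin d → V) (κ : Fin d → Fin s),
      (∀ m, v m ∈ W (κ m)) → (∃ m m', κ m ≠ κ m') → Θ v = 0)
    (hUind : ∀ i, Indec (Θ.compLinearMap (fun _ => (U i).subtype))) :
    ∃ σ : Fin r → Fin s, ∀ i, U i ≤ W (σ i) := by
  classical
  set e := ksProj U hUint with he
  set f := ksProj W hWint with hf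
  have cE : ∀ i (a b : Fin d) (v : Fin d → V),
      Θ (update v a (e i (v a))) = Θ (update v b (e i (v b))) :=
    fun i => ksProj_center Θ U hUint hUvanish i
  have cF : ∀ j (a b : Fin d) (v : Fin d → V),
      Θ (update v a (f j (v a))) = Θ (update v b (f j (v b))) :=
    fun j => ksProj_center Θ W hWint hWvanish j
  have comm : ∀ i j x, e i (f j x) = f j (e i x) := fun i j x =>
    ks_comm_general Θ hd hΘ (e i) (f j) (cE i) (cF j) x
  have main : ∀ i, ∃ j, U i ≤ W j := by
    intro i
    have dich : ∀ j, (∀ x ∈ U i, e i (f j x) = 0) ∨ (∀ x ∈ U i, e i (f j x) = x) := by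
      intro j
      set q : ↥(U i) →ₗ[k] ↥(U i) :=
        LinearMap.codRestrict (U i) ((e i ∘ₗ f j) ∘ₗ (U i).subtype)
          (fun x => ksProj_mem U hUint i _) with hqdef
      have hq_apply : ∀ x : ↥(U i), (q x : V) = e i (f j (x : V)) := fun x => rfl
      have qidem : ∀ x, q (q x) = q x := by
        intro x
        apply Subtype.ext
        rw [hq_apply, hq_apply]
        rw [show f j (e i (f j (x : V))) = e i (f j (f j (x : V))) from (comm i j _).symm]
        rw [ksProj_of_mem hWint (ksProj_mem W hWint j (x : V))]
        exact ksProj_of_mem hUint (ksProj_mem U hUint i _)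
      rcases Classical.em (LinearMap.range q = ⊥) with h0 | h0
      · left
        intro x hx
        have hm : q ⟨x, hx⟩ ∈ LinearMap.range q := LinearMap.mem_range_self q _
        rw [h0, Submodule.mem_bot] at hm
        have := congrArg (Subtype.val) hm
        rwa [hq_apply] at this
      rcases Classical.em (LinearMap.ker q = ⊥) with h1 | h1
      · right
        intro x hx
        have hinj : Function.Injective q := LinearMap.ker_eq_bot.1 h1
        have : q (q ⟨x, hx⟩) = q ⟨x, hx⟩ := qidem _
        have h2 : q ⟨x, hx⟩ = ⟨x, hx⟩ := hinj this
        have := congrArg (Subtype.val) h2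
        rwa [hq_apply] at this
      exfalso
      apply hUind i
      refine ⟨LinearMap.range q, LinearMap.ker q, h0, h1, ?_, ?_⟩
      · constructor
        · rw [Submodule.disjoint_def]
          intro x hxr hxk
          obtain ⟨y, hy⟩ := hxr
          rw [LinearMap.mem_ker] at hxk
          calc x = q y := hy.symm
            _ = q (q y) := (qidem y).symm
            _ = q x := by rw [hy]
            _ = 0 := hxk
        · rw [codisjoint_iff_le_sup]
          intro x _
          refine Submodule.mem_sup.2 ⟨q x, LinearMap.mem_range_self q x, x - q x, ?_, by abel⟩
          rw [LinearMap.mem_ker, map_sub, qidem, sub_self]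
      · intro v w hv hw
        simp only [MultilinearMap.compLinearMap_apply, Submodule.subtype_apply]
        have ha : ∀ t, f j ((v t : V)) = (v t : V) := by
          intro t
          obtain ⟨y, hy⟩ := hv t
          have : (v t : V) = f j (e i (y : V)) := by
            rw [← comm]
            rw [← hq_apply]
            exact congrArg Subtype.val hy.symm
          rw [this, ksProj_of_mem hWint (ksProj_mem W hWint j _)]
        have hb : ∀ t, f j ((w t : V)) = 0 := by
          intro t
          have hk : e i (f j ((w t : V))) = 0 := by
            have := (hw t)
            rw [LinearMap.mem_ker] at this
            have := congrArg Subtype.val this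
            rwa [hq_apply] at this
          calc f j ((w t : V)) = f j (e i ((w t : V))) := by
                rw [ksProj_of_mem hUint (w t).2]
            _ = e i (f j ((w t : V))) := (comm i j _).symm
            _ = 0 := hk
        have := ks_add_split Θ hd (f j) (cF j) (fun t => (v t : V)) (fun t => (w t : V)) ha hb
        simpa [Submodule.coe_add, Pi.add_def] using this
    obtain ⟨x₀, hx₀mem, hx₀⟩ := Submodule.exists_mem_ne_zero_of_ne_bot (hUne i)
    have hsum : ∑ j, e i (f j x₀) = x₀ := by
      rw [← map_sum]
      rw [show ∑ j, f j x₀ = x₀ from ksProj_sum W hWint x₀]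
      exact ksProj_of_mem hUint hx₀mem
    have hex : ∃ j, e i (f j x₀) ≠ 0 := by
      by_contra hc
      push_neg at hc
      rw [Finset.sum_congr rfl (fun j _ => hc j), Finset.sum_const_zero] at hsum
      exact hx₀ hsum.symm
    obtain ⟨j, hj⟩ := hex
    rcases dich j with h | h
    · exact absurd (h x₀ hx₀mem) hj
    · refine ⟨j, fun x hx => ?_⟩
      have hxx : e i (f j x) = x := h x hx
      rw [comm] at hxx
      rw [← hxx]
      exact ksProj_mem W hWint j _
  exact ⟨fun i => Classical.choose (main i), fun i => Classical.choose_spec (main i)⟩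

end KSAux

/-- Krull–Schmidt for nondegenerate `d`-linear forms: a decomposition into
indecomposable summands is unique up to permutation of the summands. -/
theorem decomposition_into_indecomposables_unique {k : Type*} [Field k] {d : ℕ}
    (hd : 3 ≤ d) {V : Type*} [AddCommGroup V] [Module k V] [FiniteDimensional k V]
    (Θ : MultilinearMap k (fun _ : Fin d => V) k) (hΘ : Nondeg Θ)
    {r s : ℕ} (U : Fin r → Submodule k V) (W : Fin s → Submodule k V)
    (hUint : DirectSum.IsInternal U) (hWint : DirectSum.IsInternal W)
    (hUne : ∀ i, U i ≠ ⊥) (hWne : ∀ j, W j ≠ ⊥)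
    (hUvanish : ∀ (v : Fin d → V) (κ : Fin d → Fin r),
      (∀ m, v m ∈ U (κ m)) → (∃ m m', κ m ≠ κ m') → Θ v = 0)
    (hWvanish : ∀ (v : Fin d → V) (κ : Fin d → Fin s),
      (∀ m, v m ∈ W (κ m)) → (∃ m m', κ m ≠ κ m') → Θ v = 0)
    (hUind : ∀ i, Indec (Θ.compLinearMap (fun _ => (U i).subtype)))
    (hWind : ∀ j, Indec (Θ.compLinearMap (fun _ => (W j).subtype))) :
    ∃ σ : Fin r ≃ Fin s, ∀ i, U i = W (σ i) := by
  obtain ⟨σ, hσ⟩ := ks_exists_le Θ hd hΘ U W hUint hWint hUne hUvanish hWvanish hUind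
  obtain ⟨τ, hτ⟩ := ks_exists_le Θ hd hΘ W U hWint hUint hWne hWvanish hUvanish hWind
  have hτσ : ∀ i, τ (σ i) = i := by
    intro i
    by_contra hne
    have h1 : U i ≤ U (τ (σ i)) := (hσ i).trans (hτ (σ i))
    have h2 : Disjoint (U i) (U (τ (σ i))) :=
      hUint.submodule_iSupIndep.pairwiseDisjoint (Ne.symm hne)
    exact hUne i (h2.eq_bot_of_le h1)
  have hστ : ∀ j, σ (τ j) = j := by
    intro j
    by_contra hne
    have h1 : W j ≤ W (σ (τ j)) := (hτ j).trans (hσ (τ j))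
    have h2 : Disjoint (W j) (W (σ (τ j))) :=
      hWint.submodule_iSupIndep.pairwiseDisjoint (Ne.symm hne)
    exact hWne j (h2.eq_bot_of_le h1)
  refine ⟨⟨σ, τ, hτσ, hστ⟩, fun i => le_antisymm (hσ i) ?_⟩
  have := hτ (σ i)
  rwa [hτσ i] at this
end

section
/- Let Θ : V^d → k be a nondegenerate d-linear form. Then (V,Θ) is indecomposable if and only if the commutative finite-dimensional algebra Z(V,Θ) is local (equivalently, has no idempotents other than 0 and 1). -/
open Function

/-- a nondegenerate `d`-linear form is indecomposable iff its center has no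
idempotents other than `0` and `1` (i.e. the center is a local algebra). -/
theorem indecomposable_iff_center_local {k : Type*} [Field k] {d : ℕ} (hd : 3 ≤ d)
    {V : Type*} [AddCommGroup V] [Module k V] [FiniteDimensional k V]
    (Θ : MultilinearMap k (fun _ : Fin d => V) k) (hΘ : Nondeg Θ) :
    Indec Θ ↔
      ∀ φ : V →ₗ[k] V, InCenter Θ φ → φ ∘ₗ φ = φ →
        φ = 0 ∨ φ = LinearMap.id := by
  haveI : Nonempty (Fin d) := ⟨⟨0, by omega⟩⟩
  constructor
  · -- Indecomposable → no nontrivial idempotents in the center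
    intro hind φ hφc hφi
    have hidem : ∀ x, φ (φ x) = φ x := fun x => by
      have := congrArg (fun ψ : V →ₗ[k] V => ψ x) hφi
      simpa using this
    by_contra hcon
    push_neg at hcon
    obtain ⟨hφ0, hφ1⟩ := hcon
    apply hind
    refine ⟨LinearMap.range φ, LinearMap.ker φ, ?_, ?_, ?_, ?_⟩
    · -- range ≠ ⊥
      intro h
      apply hφ0
      ext x
      have : φ x ∈ LinearMap.range φ := ⟨x, rfl⟩
      rw [h] at this
      simpa using this
    · -- ker ≠ ⊥
      intro h
      apply hφ1
      ext x
      have hmem : φ x - x ∈ LinearMap.ker φ := by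
        simp only [LinearMap.mem_ker, map_sub]
        rw [hidem]; abel
      rw [h] at hmem
      have hz : φ x - x = 0 := by simpa using hmem
      simpa using sub_eq_zero.mp hz
    · -- IsCompl
      constructor
      · rw [disjoint_iff]
        ext x
        simp only [Submodule.mem_inf, Submodule.mem_bot, LinearMap.mem_range,
          LinearMap.mem_ker]
        constructor
        · rintro ⟨⟨y, rfl⟩, h2⟩
          rw [← hidem y, h2]
        · rintro rfl
          exact ⟨⟨0, map_zero φ⟩, map_zero φ⟩
      · rw [codisjoint_iff]
        ext x
        simp only [Submodule.mem_top, iff_true]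
        have h1 : φ x ∈ LinearMap.range φ := ⟨x, rfl⟩
        have h2 : x - φ x ∈ LinearMap.ker φ := by
          simp only [LinearMap.mem_ker, map_sub, hidem, sub_self]
        have := Submodule.add_mem_sup h1 h2
        simpa using this
    · -- additivity
      -- first: mixed tuples vanish
      have hmix : ∀ (u : Fin d → V) (i j : Fin d), u i ∈ LinearMap.range φ →
          u j ∈ LinearMap.ker φ → Θ u = 0 := by
        rintro u i j ⟨y, hy⟩ hj
        have hfix : φ (u i) = u i := by rw [← hy, hidem]
        have h1 : Θ u = Θ (Function.update u i (φ (u i))) := by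
          rw [hfix, Function.update_eq_self]
        rw [h1, hφc i j u, LinearMap.mem_ker.mp hj, Θ.map_update_zero]
      intro v w hv hw
      have hexp : Θ (fun m => v m + w m) = ∑ s : Finset (Fin d), Θ (s.piecewise v w) :=
        Θ.map_add_univ v w
      rw [hexp]
      have hsub : ({Finset.univ, ∅} : Finset (Finset (Fin d))) ⊆ Finset.univ :=
        Finset.subset_univ _
      have hzero : ∀ s ∈ (Finset.univ : Finset (Finset (Fin d))),
          s ∉ ({Finset.univ, ∅} : Finset (Finset (Fin d))) → Θ (s.piecewise v w) = 0 := by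
        intro s _ hs
        simp only [Finset.mem_insert, Finset.mem_singleton] at hs
        push_neg at hs
        obtain ⟨hsu, hse⟩ := hs
        obtain ⟨i, hi⟩ := hse
        obtain ⟨j, hj⟩ : ∃ j, j ∉ s := by
          by_contra h
          push_neg at h
          exact hsu (Finset.eq_univ_iff_forall.mpr h)
        apply hmix _ i j
        · rw [Finset.piecewise_eq_of_mem _ _ _ hi]; exact hv i
        · rw [Finset.piecewise_eq_of_notMem _ _ _ hj]; exact hw j
      rw [← Finset.sum_subset hsub hzero,
        Finset.sum_pair (by simp [Finset.eq_empty_iff_forall_notMem] :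
          (Finset.univ : Finset (Fin d)) ≠ ∅)]
      rw [Finset.piecewise_univ, Finset.piecewise_empty]
  · -- no nontrivial idempotents → indecomposable
    intro hloc
    rintro ⟨W₁, W₂, hW₁, hW₂, hcompl, hadd⟩
    set π := W₁.linearProjOfIsCompl W₂ hcompl with hπ
    set φ : V →ₗ[k] V := W₁.subtype ∘ₗ π with hφdef
    have hmem₁ : ∀ x, φ x ∈ W₁ := fun x => (π x).2
    have hleft : ∀ x ∈ W₁, φ x = x := fun x hx => by
      have := Submodule.linearProjOfIsCompl_apply_left hcompl ⟨x, hx⟩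
      exact congrArg (Submodule.subtype W₁) this
    have hright : ∀ x ∈ W₂, φ x = 0 := fun x hx => by
      have := Submodule.projectionOnto_apply_of_mem_right hcompl hx
      simp [hφdef, show π x = 0 from this]
    have hidem : φ ∘ₗ φ = φ := by
      ext x
      exact hleft (φ x) (hmem₁ x)
    have hcenter : InCenter Θ φ := by
      intro i j v
      -- decompose v m = a m + b m
      set a : Fin d → V := fun m => φ (v m) with ha
      set b : Fin d → V := fun m => v m - φ (v m) with hb
      have hav : ∀ m, a m ∈ W₁ := fun m => hmem₁ _
      have hbv : ∀ m, b m ∈ W₂ := by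
        intro m
        have : φ (b m) = 0 := by
          simp only [hb, map_sub]
          have := hleft (φ (v m)) (hmem₁ (v m))
          rw [this, sub_self]
        have hker : LinearMap.ker φ = W₂ := by
          rw [hφdef]
          rw [LinearMap.ker_comp, Submodule.ker_subtype, Submodule.comap_bot] at *
          exact Submodule.ker_projectionOnto hcompl
        rw [← hker]
        exact this
      have key : ∀ l : Fin d, Θ (Function.update v l (φ (v l))) = Θ a := by
        intro l
        have heq : Function.update v l (φ (v l)) =
            fun m => a m + (Function.update b l 0) m := by
          funext m
          by_cases hm : m = l
          · subst hm
            simp [ha, hb]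
          · simp [Function.update_of_ne hm, ha, hb]
        rw [heq, hadd a (Function.update b l 0) hav
          (fun m => by
            by_cases hm : m = l
            · subst hm; simp
            · rw [Function.update_of_ne hm]; exact hbv m)]
        rw [Θ.map_update_zero, add_zero]
      rw [key i, key j]
    rcases hloc φ hcenter hidem with h0 | h1
    · obtain ⟨x, hx, hxne⟩ := Submodule.exists_mem_ne_zero_of_ne_bot hW₁
      apply hxne
      have := hleft x hx
      rw [h0] at this
      simpa using this.symm
    · obtain ⟨x, hx, hxne⟩ := Submodule.exists_mem_ne_zero_of_ne_bot hW₂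
      apply hxne
      have := hright x hx
      rw [h1] at this
      simpa using this
end

section
/- If Z(V,Θ) ≅ k (i.e., the center of the nondegenerate d-linear form Θ consists only of scalar multiples of the identity), then (V,Θ) is indecomposable, and moreover remains indecomposable after any field extension K/k (applied to Θ ⊗ K). -/
open Function

theorem indec_of_central' {F : Type*} [Field F] {d : ℕ} {U T : Type*} [AddCommGroup U]
    [Module F U] [AddCommGroup T] [Module F T]
    (Ξ : MultilinearMap F (fun _ : Fin d => U) T)
    (hc : ∀ φ : U →ₗ[F] U, InCenter Ξ φ → ∃ c : F, φ = c • LinearMap.id) :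
    Indec Ξ := by
  rintro ⟨W₁, W₂, h1, h2, hcompl, hadd⟩
  set π : U →ₗ[F] U := W₁.subtype ∘ₗ (W₁.projectionOnto W₂ hcompl) with hπdef
  have hπ1 : ∀ x ∈ W₁, π x = x := fun x hx => by
    exact congrArg (Submodule.subtype W₁)
      (Submodule.projectionOnto_apply_left hcompl ⟨x, hx⟩)
  have hπ2 : ∀ x ∈ W₂, π x = 0 := fun x hx => by
    show W₁.subtype (W₁.projectionOnto W₂ hcompl x) = 0
    rw [Submodule.projectionOnto_apply_of_mem_right hcompl hx]
    simp
  have hπW : ∀ x, π x ∈ W₁ := fun x => (W₁.projectionOnto W₂ hcompl x).2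
  have hπq : ∀ x : U, x - π x ∈ W₂ := by
    intro x
    have := Submodule.projection_add_projection_eq_self hcompl x
    have h' : x - π x = (W₂.projectionOnto W₁ hcompl.symm x : U) := by
      rw [hπdef]; simp only [LinearMap.comp_apply, Submodule.subtype_apply, Submodule.projection] at this ⊢
      linear_combination (norm := module) - this
    rw [h']; exact (W₂.projectionOnto W₁ hcompl.symm x).2
  -- vanishing of mixed terms
  have vanish : ∀ (v : Fin d → U) (S : Finset (Fin d)), S ≠ ∅ → S ≠ Finset.univ →
      Ξ (S.piecewise (fun m => π (v m)) (fun m => v m - π (v m))) = 0 := by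
    intro v
    set p : Fin d → U := fun m => π (v m) with hp
    set q : Fin d → U := fun m => v m - π (v m) with hq
    intro S
    induction S using Finset.strongInduction with
    | _ S ih =>
      intro hne hnu
      obtain ⟨i₀, hi₀⟩ : ∃ i₀, i₀ ∉ S := by
        by_contra h
        push_neg at h
        exact hnu (Finset.eq_univ_iff_forall.2 h)
      have hadd' := hadd (fun m => if m ∈ S then p m else 0) q
        (fun m => by by_cases h : m ∈ S <;> simp [h, hπW, Submodule.zero_mem, p])
        (fun m => hπq (v m))
      have hzero : Ξ (fun m => if m ∈ S then p m else 0) = 0 :=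
        Ξ.map_coord_zero i₀ (by simp [hi₀])
      have hpw : (fun m => (if m ∈ S then p m else 0) + q m) = S.piecewise (p + q) q := by
        funext m
        by_cases h : m ∈ S <;> simp [Finset.piecewise, h]
      rw [hpw, Ξ.map_piecewise_add p q S, hzero, zero_add] at hadd'
      -- hadd' : ∑ s ∈ S.powerset, Ξ (s.piecewise p q) = Ξ q
      have hempty : (∅ : Finset (Fin d)).piecewise p q = q := Finset.piecewise_empty p q
      have hmemS : S ∈ S.powerset.erase ∅ := by
        simp [Finset.mem_erase, hne, Finset.mem_powerset]
      rw [← Finset.add_sum_erase _ _ (Finset.empty_mem_powerset S), hempty] at hadd'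
      have hrest : ∑ s ∈ S.powerset.erase ∅, Ξ (s.piecewise p q) = 0 := by
        linear_combination (norm := abel) hadd'
      rw [← Finset.add_sum_erase _ _ hmemS] at hrest
      have hothers : ∑ s ∈ (S.powerset.erase ∅).erase S, Ξ (s.piecewise p q) = 0 := by
        apply Finset.sum_eq_zero
        intro s hs
        have hs1 : s ≠ S := (Finset.mem_erase.1 hs).1
        have hs2 : s ≠ ∅ := (Finset.mem_erase.1 (Finset.mem_erase.1 hs).2).1
        have hs3 : s ⊆ S := Finset.mem_powerset.1 (Finset.mem_erase.1 (Finset.mem_erase.1 hs).2).2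
        have hsub : s ⊂ S := Finset.ssubset_iff_subset_ne.2 ⟨hs3, hs1⟩
        exact ih s hsub hs2 (fun h => hnu (Finset.eq_univ_iff_forall.2
          (fun m => hs3 (h ▸ Finset.mem_univ m))))
      rw [hothers, add_zero] at hrest
      exact hrest
  -- π is central
  have hslot : ∀ (i : Fin d) (v : Fin d → U),
      Ξ (Function.update v i (π (v i))) = Ξ (fun m => π (v m)) := by
    intro i v
    set p : Fin d → U := fun m => π (v m) with hp
    set q : Fin d → U := fun m => v m - π (v m) with hq
    have hdecomp : Function.update v i (π (v i)) = p + Function.update q i 0 := by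
      funext m
      by_cases h : m = i
      · subst h; simp [p, q]
      · simp [Function.update_of_ne h, p, q]
    rw [hdecomp, Ξ.map_add_univ]
    rw [Finset.sum_eq_single Finset.univ]
    · have : Finset.univ.piecewise p (Function.update q i 0) = p := by
        funext m; simp [Finset.piecewise]
      rw [this]
    · intro s _ hs
      by_cases hi : i ∈ s
      · have : s.piecewise p (Function.update q i 0) = s.piecewise p q := by
          funext m
          by_cases h : m ∈ s
          · simp [Finset.piecewise, h]
          · have : m ≠ i := fun hmi => h (hmi ▸ hi)
            simp [Finset.piecewise, h, Function.update_of_ne this]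
        rw [this]
        exact vanish v s (fun h => by simp [h] at hi) hs
      · exact Ξ.map_coord_zero i (by simp [Finset.piecewise, hi])
    · intro h
      exact absurd (Finset.mem_univ _) h
  have hcent : InCenter Ξ π := fun i j v => by rw [hslot i v, hslot j v]
  obtain ⟨c, hcc⟩ := hc π hcent
  obtain ⟨w₁, hw₁, hw₁0⟩ := Submodule.ne_bot_iff W₁ |>.1 h1
  obtain ⟨w₂, hw₂, hw₂0⟩ := Submodule.ne_bot_iff W₂ |>.1 h2
  have e1 : c • w₁ = w₁ := by
    have := hπ1 w₁ hw₁
    rw [hcc] at this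
    simpa using this
  have e2 : c • w₂ = 0 := by
    have := hπ2 w₂ hw₂
    rw [hcc] at this
    simpa using this
  have hc0 : c = 0 := by
    by_contra h
    exact hw₂0 (by simpa [h] using congrArg (fun x => c⁻¹ • x) e2)
  rw [hc0, zero_smul] at e1
  exact hw₁0 e1.symm

open TensorProduct in
theorem center_transfer' {k : Type*} [Field k] {d : ℕ} {V : Type*} [AddCommGroup V] [Module k V]
    (Θ : MultilinearMap k (fun _ : Fin d => V) k)
    (hcentral : ∀ φ : V →ₗ[k] V, InCenter Θ φ → ∃ c : k, φ = c • LinearMap.id)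
    (K : Type*) [Field K] [Algebra k K]
    (Θ' : MultilinearMap K (fun _ : Fin d => K ⊗[k] V) K)
    (hΘ' : ∀ v : Fin d → V, Θ' (fun m => (1 : K) ⊗ₜ[k] v m) = algebraMap k K (Θ v))
    (φ : (K ⊗[k] V) →ₗ[K] K ⊗[k] V) (hφ : InCenter Θ' φ) :
    ∃ a : K, φ = a • LinearMap.id := by
  rcases subsingleton_or_nontrivial V with hV | hV
  · -- trivial case : K ⊗ V is trivial
    have hz : ∀ x : K ⊗[k] V, x = 0 := by
      intro x
      induction x using TensorProduct.induction_on with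
      | zero => rfl
      | tmul b w => rw [Subsingleton.elim w 0, tmul_zero]
      | add x y hx hy => rw [hx, hy, add_zero]
    refine ⟨0, ?_⟩
    apply LinearMap.ext
    intro x
    rw [hz (φ x)]
    simp
  · classical
    let B := Module.Basis.ofVectorSpace k K
    let r : Module.Basis.ofVectorSpaceIndex k K → (K ⊗[k] V →ₗ[k] V) := fun α =>
      (TensorProduct.lid k V).toLinearMap ∘ₗ LinearMap.rTensor V (B.coord α)
    have r_tmul : ∀ α (b : K) (w : V), r α (b ⊗ₜ w) = B.coord α b • w := by
      intro α b w
      simp [r]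
    -- key coordinate-extraction identity
    have key : ∀ (i : Fin d) (u : Fin d → V) (α) (x : K ⊗[k] V),
        B.coord α (Θ' (Function.update (fun m => (1:K) ⊗ₜ[k] u m) i x))
          = Θ (Function.update u i (r α x)) := by
      intro i u α x
      induction x using TensorProduct.induction_on with
      | zero => simp
      | tmul b w =>
        have h1 : (b ⊗ₜ[k] w : K ⊗[k] V) = b • ((1:K) ⊗ₜ[k] w) := by
          rw [TensorProduct.smul_tmul', smul_eq_mul, mul_one]
        have h2 : Function.update (fun m => (1:K) ⊗ₜ[k] u m) i ((1:K) ⊗ₜ[k] w)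
            = fun m => (1:K) ⊗ₜ[k] (Function.update u i w m) := by
          funext m
          by_cases h : m = i
          · subst h; simp
          · simp [Function.update_of_ne h]
        have hL : Θ' (Function.update (fun m => (1:K) ⊗ₜ[k] u m) i (b ⊗ₜ[k] w))
            = b • algebraMap k K (Θ (Function.update u i w)) := by
          rw [h1, Θ'.map_update_smul, h2, hΘ']
        rw [hL, r_tmul]
        have h3 : b • algebraMap k K (Θ (Function.update u i w))
            = Θ (Function.update u i w) • b := by
          rw [smul_eq_mul, Algebra.smul_def, mul_comm]
        rw [h3, map_smul, Θ.map_update_smul, smul_eq_mul, smul_eq_mul, mul_comm]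
      | add x y hx hy =>
        rw [Θ'.map_update_add, map_add, hx, hy, (r α).map_add, Θ.map_update_add]
    -- each coordinate map is central
    have hψcent : ∀ α, InCenter Θ ((r α) ∘ₗ (φ.restrictScalars k) ∘ₗ (TensorProduct.mk k K V 1)) := by
      intro α i j u
      have h := hφ i j (fun m => (1:K) ⊗ₜ[k] u m)
      have := congrArg (B.coord α) h
      rw [key i u α, key j u α] at this
      exact this
    choose c hc using fun α => hcentral _ (hψcent α)
    have hrφ : ∀ α (v : V), r α (φ ((1:K) ⊗ₜ[k] v)) = c α • v := by
      intro α v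
      have := congrArg (fun (ψ : V →ₗ[k] V) => ψ v) (hc α)
      simpa using this
    -- build the scalar a
    let BV := Module.Basis.ofVectorSpace k V
    have : Nonempty (Module.Basis.ofVectorSpaceIndex k V) := BV.index_nonempty
    let β₀ := Classical.arbitrary (Module.Basis.ofVectorSpaceIndex k V)
    let f : V →ₗ[k] k := BV.coord β₀
    have hf : f (BV β₀) = 1 := by simp [f, Module.Basis.coord_apply]
    let g : K ⊗[k] V →ₗ[k] K :=
      (TensorProduct.rid k K).toLinearMap ∘ₗ LinearMap.lTensor K f
    have g_tmul : ∀ (b : K) (w : V), g (b ⊗ₜ w) = f w • b := by intro b w; simp [g]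
    set a : K := g (φ ((1:K) ⊗ₜ[k] BV β₀)) with ha
    have coord_g : ∀ α (z : K ⊗[k] V), B.coord α (g z) = f (r α z) := by
      intro α z
      induction z using TensorProduct.induction_on with
      | zero => simp
      | tmul b w =>
        rw [g_tmul, r_tmul, map_smul, f.map_smul, smul_eq_mul, smul_eq_mul, mul_comm]
      | add x y hx hy => rw [(g).map_add, map_add, (r α).map_add, f.map_add, hx, hy]
    have coord_a : ∀ α, B.coord α a = c α := by
      intro α
      rw [ha, coord_g, hrφ, f.map_smul, hf, smul_eq_mul, mul_one]
    -- joint injectivity of the r α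
    have sep : ∀ x y : K ⊗[k] V, (∀ α, r α x = r α y) → x = y := by
      intro x y h
      have base : ∀ (z : K ⊗[k] V) α β,
          (B.tensorProduct BV).repr z (α, β) = BV.repr (r α z) β := by
        intro z α β
        induction z using TensorProduct.induction_on with
        | zero => simp
        | tmul b w =>
          rw [Module.Basis.tensorProduct_repr_tmul_apply, r_tmul]
          simp [Module.Basis.coord_apply, smul_eq_mul, mul_comm]
        | add x y hx hy => simp [map_add, hx, hy]
      apply (B.tensorProduct BV).ext_elem
      rintro ⟨α, β⟩
      rw [base, base, h α]
    refine ⟨a, ?_⟩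
    have hpure : ∀ v : V, φ ((1:K) ⊗ₜ[k] v) = a ⊗ₜ[k] v := by
      intro v
      apply sep
      intro α
      rw [hrφ, r_tmul, coord_a]
    apply LinearMap.ext
    intro x
    show φ x = a • x
    induction x using TensorProduct.induction_on with
    | zero => simp
    | tmul b w =>
      have h1 : (b ⊗ₜ[k] w : K ⊗[k] V) = b • ((1:K) ⊗ₜ[k] w) := by
        rw [TensorProduct.smul_tmul', smul_eq_mul, mul_one]
      rw [h1, φ.map_smul, hpure, smul_comm a b]
      congr 1
      rw [TensorProduct.smul_tmul', smul_eq_mul, mul_one]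
    | add x y hx hy => rw [φ.map_add, hx, hy, smul_add]

open TensorProduct in
/-- a central nondegenerate `d`-linear form is indecomposable and remains
indecomposable after any field extension `K/k`. -/
theorem central_implies_absolutely_indecomposable {k : Type*} [Field k] {d : ℕ}
    (hd : 3 ≤ d) {V : Type*} [AddCommGroup V] [Module k V] [FiniteDimensional k V]
    (Θ : MultilinearMap k (fun _ : Fin d => V) k) (hΘ : Nondeg Θ)
    (hcentral : ∀ φ : V →ₗ[k] V, InCenter Θ φ → ∃ c : k, φ = c • LinearMap.id) :
    Indec Θ ∧
    ∀ (K : Type*) [Field K] [Algebra k K]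
      (Θ' : MultilinearMap K (fun _ : Fin d => K ⊗[k] V) K),
      (∀ v : Fin d → V, Θ' (fun m => (1 : K) ⊗ₜ[k] v m) = algebraMap k K (Θ v)) →
      Indec Θ' := by
  constructor
  · exact indec_of_central' Θ hcentral
  · intro K _ _ Θ' hΘ'
    exact indec_of_central' Θ' (fun φ hφ => center_transfer' Θ hcentral K Θ' hΘ' φ hφ)
end

section
/- Let V = k² with basis e_1, e_2 and let Θ be the d-linear form (d ≥ 3) with Θ(e_{i_1},...,e_{i_d}) = a_{i_1 i_2} where (a_{ij}) = [[1,-1],[1,0]]. Then Z(V,Θ) = k·id, i.e., every φ ∈ End(V) satisfying the center condition for Θ is a scalar multiple of the identity. -/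
open Function

/-- the `d`-linear form on `k²` whose coefficient tensor is
`a_{i₁…i_d} = a_{i₁ i₂}` with `(a_{ij}) = [[1,-1],[1,0]]` has trivial center. -/
theorem explicit_central_form {k : Type*} [Field k] {d : ℕ} (hd : 3 ≤ d)
    (hchar : ringChar k = 0 ∨ d < ringChar k)
    (Θ : MultilinearMap k (fun _ : Fin d => (Fin 2 → k)) k)
    (hΘ : ∀ idx : Fin d → Fin 2,
      Θ (fun m => Pi.single (idx m) (1 : k)) =
        !![(1 : k), -1; 1, 0] (idx ⟨0, by omega⟩) (idx ⟨1, by omega⟩)) :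
    ∀ φ : (Fin 2 → k) →ₗ[k] (Fin 2 → k), InCenter Θ φ →
      ∃ c : k, φ = c • LinearMap.id := by
  intro φ hφ
  have hw : ∀ w : Fin 2 → k, w = w 0 • (Pi.single 0 1 : Fin 2 → k) + w 1 • (Pi.single 1 1 : Fin 2 → k) := by
    intro w; funext r; fin_cases r <;> simp
  have L : ∀ (v : Fin d → (Fin 2 → k)) (i : Fin d) (w : Fin 2 → k),
      Θ (update v i w) = w 0 * Θ (update v i (Pi.single 0 1))
        + w 1 * Θ (update v i (Pi.single 1 1)) := by
    intro v i w
    conv_lhs => rw [hw w]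
    rw [Θ.map_update_add, Θ.map_update_smul, Θ.map_update_smul, smul_eq_mul, smul_eq_mul]
  have hupd : ∀ (idx : Fin d → Fin 2) (i : Fin d) (r : Fin 2),
      (update (fun m => Pi.single (idx m) (1:k)) i (Pi.single r 1 : Fin 2 → k) : Fin d → Fin 2 → k)
        = fun m => Pi.single (update idx i r m) (1:k) := by
    intro idx i r; funext m
    rcases eq_or_ne m i with h|h
    · subst h; simp
    · simp [Function.update_of_ne h]
  have key : ∀ (idx : Fin d → Fin 2) (i : Fin d),
      Θ (update (fun m => Pi.single (idx m) (1:k)) i (φ (Pi.single (idx i) 1)))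
        = φ (Pi.single (idx i) 1) 0 *
            !![(1:k),-1;1,0] (update idx i 0 ⟨0, by omega⟩) (update idx i 0 ⟨1, by omega⟩)
        + φ (Pi.single (idx i) 1) 1 *
            !![(1:k),-1;1,0] (update idx i 1 ⟨0, by omega⟩) (update idx i 1 ⟨1, by omega⟩) := by
    intro idx i
    rw [L, hupd, hupd, hΘ, hΘ]
  have i0 : Fin d := ⟨0, by omega⟩
  -- main equations
  have main : ∀ s t : Fin 2,
      Θ (update (fun m => Pi.single ((fun m : Fin d => if m = ⟨0, by omega⟩ then s else if m = ⟨1, by omega⟩ then t else 0) m) (1:k)) ⟨0, by omega⟩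
          (φ (Pi.single s 1)))
      = Θ (update (fun m => Pi.single ((fun m : Fin d => if m = ⟨0, by omega⟩ then s else if m = ⟨1, by omega⟩ then t else 0) m) (1:k)) ⟨2, by omega⟩
          (φ (Pi.single 0 1))) := by
    intro s t
    have := hφ ⟨0, by omega⟩ ⟨2, by omega⟩
      (fun m => Pi.single ((fun m : Fin d => if m = ⟨0, by omega⟩ then s else if m = ⟨1, by omega⟩ then t else 0) m) (1:k))
    simpa using this
  have eqn : ∀ s t : Fin 2,
      φ (Pi.single s 1) 0 * !![(1:k),-1;1,0] 0 t + φ (Pi.single s 1) 1 * !![(1:k),-1;1,0] 1 t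
      = φ (Pi.single 0 1) 0 * !![(1:k),-1;1,0] s t + φ (Pi.single 0 1) 1 * !![(1:k),-1;1,0] s t := by
    intro s t
    have h := main s t
    rw [show (φ (Pi.single s 1)) = φ (Pi.single ((if (⟨0, by omega⟩ : Fin d) = ⟨0, by omega⟩ then s else if (⟨0, by omega⟩:Fin d) = ⟨1, by omega⟩ then t else 0)) 1) by norm_num] at h
    rw [key] at h
    rw [show (φ (Pi.single (0:Fin 2) 1)) = φ (Pi.single ((if (⟨2, by omega⟩ : Fin d) = ⟨0, by omega⟩ then s else if (⟨2, by omega⟩:Fin d) = ⟨1, by omega⟩ then t else 0)) 1) by norm_num] at h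
    rw [key] at h
    simp only [Function.update_apply, Fin.mk.injEq] at h
    norm_num at h
    convert h using 2 <;> norm_num
  refine ⟨φ (Pi.single 0 1) 0, ?_⟩
  have h01 := eqn 0 1
  have h10 := eqn 1 0
  have h11 := eqn 1 1
  norm_num at h01 h10 h11
  apply (Pi.basisFun k (Fin 2)).ext
  intro i
  fin_cases i <;> [skip; skip] <;>
  · funext r
    fin_cases r <;> simp [Pi.basisFun_apply] <;>
      first
      | linear_combination h01
      | linear_combination h11
      | linear_combination h10 + h01 - h11
end

section
/- Let Δ : U^d → S and Θ : V^d → T be nondegenerate multilinear maps that are symmetrically equivalent via bijections φ_1,...,φ_d : U → V and ψ : S → T. Then for all k, l, the composition φ_k⁻¹ ∘ φ_l lies in the center Z(U,S,Δ), and φ_k ∘ φ_l⁻¹ lies in Z(V,T,Θ). -/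
open Function

/-- There is a permutation sending `i ↦ p` and `j ↦ q` when `i ≠ j` and `p ≠ q`. -/
lemma exists_perm_two {α : Type*} [DecidableEq α] {i j p q : α} (hij : i ≠ j) (hpq : p ≠ q) :
    ∃ σ : Equiv.Perm α, σ i = p ∧ σ j = q := by
  refine ⟨(Equiv.swap i p).trans (Equiv.swap (Equiv.swap i p j) q), ?_, ?_⟩
  · simp only [Equiv.trans_apply, Equiv.swap_apply_left]
    apply Equiv.swap_apply_of_ne_of_ne
    · intro h
      exact hij ((Equiv.swap i p).injective ((Equiv.swap_apply_left i p).trans h))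
    · exact hpq
  · simp only [Equiv.trans_apply, Equiv.swap_apply_left]

/-- if nondegenerate multilinear maps `Δ` and `Θ` are symmetrically
equivalent via `φ₁, …, φ_d` and `ψ`, then `φ_p⁻¹ ∘ φ_q ∈ Z(U,S,Δ)` and
`φ_p ∘ φ_q⁻¹ ∈ Z(V,T,Θ)` for all `p, q`. -/
theorem symEquiv_center_elements {k : Type*} [Field k] {d : ℕ} (hd : 3 ≤ d)
    {U V S T : Type*} [AddCommGroup U] [Module k U] [FiniteDimensional k U]
    [AddCommGroup V] [Module k V] [FiniteDimensional k V]
    [AddCommGroup S] [Module k S] [FiniteDimensional k S]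
    [AddCommGroup T] [Module k T] [FiniteDimensional k T]
    (Δ : MultilinearMap k (fun _ : Fin d => U) S)
    (Θ : MultilinearMap k (fun _ : Fin d => V) T)
    (hΔ : Nondeg Δ) (hΘ : Nondeg Θ)
    (φ : Fin d → (U ≃ₗ[k] V)) (ψ : S ≃ₗ[k] T)
    (hequiv : ∀ (σ : Equiv.Perm (Fin d)) (u : Fin d → U),
      ψ (Δ u) = Θ (fun m => φ (σ m) (u m))) :
    ∀ p q : Fin d,
      InCenter Δ ((φ q).trans (φ p).symm).toLinearMap ∧
      InCenter Θ ((φ q).symm.trans (φ p)).toLinearMap := by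
  intro p q
  by_cases hpq : p = q
  · subst hpq
    constructor <;>
    · intro i j v
      simp
  constructor
  · -- center element of Δ
    intro i j u
    by_cases hij : i = j
    · subst hij; rfl
    obtain ⟨σ, hσi, hσj⟩ := exists_perm_two hij hpq
    set τ : Equiv.Perm (Fin d) := (Equiv.swap i j).trans σ with hτ
    have hτi : τ i = q := by simp [hτ, Equiv.trans_apply, hσj]
    have hτj : τ j = p := by simp [hτ, Equiv.trans_apply, hσi]
    have hτm : ∀ m, m ≠ i → m ≠ j → τ m = σ m := by
      intro m h1 h2
      simp [hτ, Equiv.trans_apply, Equiv.swap_apply_of_ne_of_ne h1 h2]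
    apply ψ.injective
    rw [hequiv σ, hequiv τ]
    congr 1
    funext m
    rcases eq_or_ne m i with rfl | hmi
    · rw [Function.update_self, Function.update_of_ne hij, hσi, hτi]
      simp
    rcases eq_or_ne m j with rfl | hmj
    · rw [Function.update_self, Function.update_of_ne (Ne.symm hij), hσj, hτj]
      simp
    · rw [Function.update_of_ne hmi, Function.update_of_ne hmj, hτm m hmi hmj]
  · -- center element of Θ
    have key : ∀ (a b : Fin d), a ≠ b → ∀ v : Fin d → V,
        Θ (Function.update v a (((φ q).symm.trans (φ p)).toLinearMap (v a))) =
        Θ (Function.update v b (((φ q).symm.trans (φ p)).toLinearMap (v b))) := by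
      intro a b hab v
      obtain ⟨σ, hσa, hσb⟩ := exists_perm_two hab (Ne.symm hpq)
      set τ : Equiv.Perm (Fin d) := (Equiv.swap a b).trans σ with hτ
      have hτa : τ a = p := by simp [hτ, Equiv.trans_apply, hσb]
      have hτb : τ b = q := by simp [hτ, Equiv.trans_apply, hσa]
      have hτm : ∀ m, m ≠ a → m ≠ b → τ m = σ m := by
        intro m h1 h2
        simp [hτ, Equiv.trans_apply, Equiv.swap_apply_of_ne_of_ne h1 h2]
      set w : Fin d → V := Function.update v b (((φ q).symm.trans (φ p)).toLinearMap (v b))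
        with hw
      set u : Fin d → U := fun m => (φ (σ m)).symm (w m) with hu
      have e1 : ψ (Δ u) = Θ w := by
        rw [hequiv σ]
        congr 1
        funext m
        exact (φ (σ m)).apply_symm_apply _
      have e2 : ψ (Δ u) = Θ (Function.update v a (((φ q).symm.trans (φ p)).toLinearMap (v a))) := by
        rw [hequiv τ]
        congr 1
        funext m
        rcases eq_or_ne m a with rfl | hma
        · rw [Function.update_self, hτa, hu]
          simp only [hw]
          rw [Function.update_of_ne hab, hσa]
          simp
        rcases eq_or_ne m b with rfl | hmb
        · rw [Function.update_of_ne (Ne.symm hab), hτb, hu]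
          simp only [hw]
          rw [Function.update_self, hσb]
          simp
        · rw [Function.update_of_ne hma, hτm m hma hmb, hu]
          simp only [hw]
          rw [Function.update_of_ne hmb]
          exact (φ (σ m)).apply_symm_apply _
      exact e2.symm.trans e1
    intro i j v
    by_cases hij : i = j
    · subst hij; rfl
    have hm0 : ∃ m0 : Fin d, m0 ≠ i ∧ m0 ≠ j := by
      by_contra h
      push_neg at h
      have hsub : (Finset.univ : Finset (Fin d)) ⊆ {i, j} := by
        intro m _
        rcases eq_or_ne m i with rfl | hmi
        · simp
        · simp [h m hmi]
      have hcard := Finset.card_le_card hsub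
      have h2 : ({i, j} : Finset (Fin d)).card ≤ 2 := by
        apply (Finset.card_insert_le _ _).trans
        simp
      simp only [Finset.card_univ, Fintype.card_fin] at hcard
      omega
    obtain ⟨m0, hm0i, hm0j⟩ := hm0
    exact (key i m0 (Ne.symm hm0i) v).trans (key j m0 (Ne.symm hm0j) v).symm
end
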